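/- Let A be a d×d real symmetric matrix with eigenvalues λ₁ ≥ ⋯ ≥ λ_d, satisfying λ₁ = λ₂ = λ₃ = λ > 0 and |λ_d| ≤ λ. Let {e_i} be an orthonormal eigenbasis with Ae_i = λ_i e_i, and for x ∈ S^{d-1} write x_i = ⟨x, e_i⟩. Then for all x, y ∈ S^{d-1}: Σ_{i=1}^{3} [2λ(1 - x_i² - y_i²) - ⟨Ax,y⟩(2 - x_i² - y_i² - 2x_i y_i)] ≥ 0. -/

import Mathlib

set_option maxHeartbeats 1000000

open scoped RealInnerProductSpace

lemma stmt2_aux (l Xs Ys P s : ℝ) (hl : 0 < l) (hXle : Xs ≤ 1) (hYle : Ys ≤ 1)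
    (hPbd : 2 * P ≤ Xs + Ys)
    (hsfin : s ≤ l * P + (l / 2 * (1 - Xs) + l / 2 * (1 - Ys))) :
    0 ≤ 2 * l * (3 - Xs - Ys) - s * (6 - Xs - Ys - 2 * P) := by
  have h6 : 0 ≤ 6 - Xs - Ys - 2 * P := by linarith
  rcases le_or_gt s 0 with hc | hc
  · nlinarith [mul_nonneg (neg_nonneg.mpr hc) h6]
  · have hmul := mul_le_mul_of_nonneg_right hsfin h6
    nlinarith [hmul, mul_nonneg (mul_nonneg hl.le
      (show (0:ℝ) ≤ Xs + Ys - 2 * P by linarith))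
      (show (0:ℝ) ≤ 4 - 2 * P - Xs - Ys by linarith)]

/-- pointwise positivity of the summed second-variation quantity for the top
three eigendirections of a symmetric matrix `A` with `λ₁ = λ₂ = λ₃ = λ > 0` and
`λ₁ ≥ ⋯ ≥ λ_d`, `|λ_d| ≤ λ`. -/
theorem stmt2 {d : ℕ} (hd : 3 ≤ d)
    (A : EuclideanSpace ℝ (Fin d) →ₗ[ℝ] EuclideanSpace ℝ (Fin d))
    (hsymm : ∀ x y : EuclideanSpace ℝ (Fin d), ⟪A x, y⟫ = ⟪x, A y⟫)
    (b : OrthonormalBasis (Fin d) ℝ (EuclideanSpace ℝ (Fin d)))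
    (lam : Fin d → ℝ) (heig : ∀ i, A (b i) = lam i • b i)
    (hmono : ∀ i j : Fin d, i ≤ j → lam j ≤ lam i)
    (l : ℝ) (hl : 0 < l)
    (h0 : lam ⟨0, by omega⟩ = l) (h1 : lam ⟨1, by omega⟩ = l)
    (h2 : lam ⟨2, by omega⟩ = l)
    (hlast : |lam ⟨d - 1, by omega⟩| ≤ l)
    (x y : EuclideanSpace ℝ (Fin d)) (hx : ‖x‖ = 1) (hy : ‖y‖ = 1) :
    0 ≤ ∑ i ∈ ({⟨0, by omega⟩, ⟨1, by omega⟩, ⟨2, by omega⟩} : Finset (Fin d)),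
        (2 * l * (1 - ⟪x, b i⟫ ^ 2 - ⟪y, b i⟫ ^ 2)
          - ⟪A x, y⟫ * (2 - ⟪x, b i⟫ ^ 2 - ⟪y, b i⟫ ^ 2 - 2 * ⟪x, b i⟫ * ⟪y, b i⟫)) := by
  have hd0 : (0:ℕ) < d := by omega
  set i0 : Fin d := ⟨0, by omega⟩ with hi0
  set i1 : Fin d := ⟨1, by omega⟩ with hi1
  set i2 : Fin d := ⟨2, by omega⟩ with hi2
  -- eigenvalue bounds
  have hlam_le : ∀ i, lam i ≤ l := by
    intro i
    have := hmono i0 i (Fin.le_def.mpr (Nat.zero_le _))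
    rw [h0] at this; exact this
  have hlam_ge : ∀ i, -l ≤ lam i := by
    intro i
    have hle : i ≤ (⟨d - 1, by omega⟩ : Fin d) := by
      rw [Fin.le_def]
      have := i.isLt
      simp only []
      omega
    have h1' := hmono i ⟨d - 1, by omega⟩ hle
    have h2' := (abs_le.mp hlast).1
    linarith
  -- coordinates
  set X : Fin d → ℝ := fun i => ⟪x, b i⟫ with hX
  set Y : Fin d → ℝ := fun i => ⟪y, b i⟫ with hY
  -- Parseval
  have parsx : ∑ i, X i ^ 2 = 1 := by
    have := b.sum_inner_mul_inner x x
    rw [real_inner_self_eq_norm_sq, hx] at this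
    simp only [hX]
    calc ∑ i, ⟪x, b i⟫ ^ 2 = ∑ i, ⟪x, b i⟫ * ⟪b i, x⟫ := by
          refine Finset.sum_congr rfl fun i _ => ?_
          rw [real_inner_comm (b i) x]; ring
      _ = 1 := by rw [this]; norm_num
  have parsy : ∑ i, Y i ^ 2 = 1 := by
    have := b.sum_inner_mul_inner y y
    rw [real_inner_self_eq_norm_sq, hy] at this
    simp only [hY]
    calc ∑ i, ⟪y, b i⟫ ^ 2 = ∑ i, ⟪y, b i⟫ * ⟪b i, y⟫ := by
          refine Finset.sum_congr rfl fun i _ => ?_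
          rw [real_inner_comm (b i) y]; ring
      _ = 1 := by rw [this]; norm_num
  -- inner product expansion
  have hs : ⟪A x, y⟫ = ∑ i, lam i * (X i * Y i) := by
    have := b.sum_inner_mul_inner (A x) y
    rw [← this]
    refine Finset.sum_congr rfl fun i _ => ?_
    rw [hsymm, heig, real_inner_smul_right]
    simp only [hX, hY]
    rw [real_inner_comm (b i) y]
    ring
  -- the three-element set
  set T : Finset (Fin d) := {i0, i1, i2} with hT
  have hne01 : i0 ≠ i1 := by simp [hi0, hi1, Fin.ext_iff]
  have hne02 : i0 ≠ i2 := by simp [hi0, hi2, Fin.ext_iff]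
  have hne12 : i1 ≠ i2 := by simp [hi1, hi2, Fin.ext_iff]
  have hsumT : ∀ f : Fin d → ℝ, ∑ i ∈ T, f i = f i0 + f i1 + f i2 := by
    intro f
    rw [hT, Finset.sum_insert (by simp [hne01, hne02]),
      Finset.sum_insert (by simp [hne12]), Finset.sum_singleton]
    ring
  have hTsub : T ⊆ Finset.univ := Finset.subset_univ T
  have hsdiff : ∀ f : Fin d → ℝ, ∑ i ∈ Finset.univ \ T, f i = ∑ i, f i - ∑ i ∈ T, f i := by
    intro f
    have := Finset.sum_sdiff (f := f) hTsub
    linarith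
  set Xs : ℝ := X i0 ^ 2 + X i1 ^ 2 + X i2 ^ 2 with hXs
  set Ys : ℝ := Y i0 ^ 2 + Y i1 ^ 2 + Y i2 ^ 2 with hYs
  set P : ℝ := X i0 * Y i0 + X i1 * Y i1 + X i2 * Y i2 with hP
  have exT := hsumT (fun i => X i ^ 2)
  have eyT := hsumT (fun i => Y i ^ 2)
  have ex := hsdiff (fun i => X i ^ 2)
  have ey := hsdiff (fun i => Y i ^ 2)
  rw [parsx, exT] at ex
  rw [parsy, eyT] at ey
  have hXle : Xs ≤ 1 := by
    have h' : (0:ℝ) ≤ ∑ i ∈ Finset.univ \ T, X i ^ 2 :=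
      Finset.sum_nonneg fun i _ => sq_nonneg _
    rw [ex] at h'
    rw [hXs]; linarith
  have hYle : Ys ≤ 1 := by
    have h' : (0:ℝ) ≤ ∑ i ∈ Finset.univ \ T, Y i ^ 2 :=
      Finset.sum_nonneg fun i _ => sq_nonneg _
    rw [ey] at h'
    rw [hYs]; linarith
  -- split inner product
  have hsplit : ⟪A x, y⟫ = l * P + ∑ i ∈ Finset.univ \ T, lam i * (X i * Y i) := by
    have e := hsdiff (fun i => lam i * (X i * Y i))
    have eT := hsumT (fun i => lam i * (X i * Y i))
    rw [eT] at e
    rw [hs, e, h0, h1, h2, hP]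
    ring
  have htail : ∑ i ∈ Finset.univ \ T, lam i * (X i * Y i)
      ≤ l / 2 * (1 - Xs) + l / 2 * (1 - Ys) := by
    have h1' : ∑ i ∈ Finset.univ \ T, lam i * (X i * Y i)
        ≤ ∑ i ∈ Finset.univ \ T, (l / 2 * X i ^ 2 + l / 2 * Y i ^ 2) := by
      apply Finset.sum_le_sum
      intro i _
      nlinarith [mul_nonneg (sub_nonneg.mpr (hlam_le i)) (sq_nonneg (X i + Y i)),
        mul_nonneg (by linarith [hlam_ge i] : (0:ℝ) ≤ l + lam i) (sq_nonneg (X i - Y i))]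
    rw [Finset.sum_add_distrib, ← Finset.mul_sum, ← Finset.mul_sum, ex, ey] at h1'
    exact h1'
  have hsfin : ⟪A x, y⟫ ≤ l * P + (l / 2 * (1 - Xs) + l / 2 * (1 - Ys)) := by
    rw [hsplit]; linarith
  -- bound on P
  have hPbd : 2 * P ≤ Xs + Ys := by
    rw [hP, hXs, hYs]
    nlinarith [sq_nonneg (X i0 - Y i0), sq_nonneg (X i1 - Y i1), sq_nonneg (X i2 - Y i2)]
  have key := stmt2_aux l Xs Ys P (⟪A x, y⟫) hl hXle hYle hPbd hsfin
  have expand : 2 * l * (3 - Xs - Ys) - ⟪A x, y⟫ * (6 - Xs - Ys - 2 * P)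
      = (2 * l * (1 - ⟪x, b i0⟫ ^ 2 - ⟪y, b i0⟫ ^ 2)
          - ⟪A x, y⟫ * (2 - ⟪x, b i0⟫ ^ 2 - ⟪y, b i0⟫ ^ 2 - 2 * ⟪x, b i0⟫ * ⟪y, b i0⟫))
        + (2 * l * (1 - ⟪x, b i1⟫ ^ 2 - ⟪y, b i1⟫ ^ 2)
          - ⟪A x, y⟫ * (2 - ⟪x, b i1⟫ ^ 2 - ⟪y, b i1⟫ ^ 2 - 2 * ⟪x, b i1⟫ * ⟪y, b i1⟫))
        + (2 * l * (1 - ⟪x, b i2⟫ ^ 2 - ⟪y, b i2⟫ ^ 2)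
          - ⟪A x, y⟫ * (2 - ⟪x, b i2⟫ ^ 2 - ⟪y, b i2⟫ ^ 2 - 2 * ⟪x, b i2⟫ * ⟪y, b i2⟫)) := by
    rw [hXs, hYs, hP, hX, hY]
    ring
  rw [hsumT]
  linarith [key, expand.le, expand.ge]
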